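/- arXiv:2403.15555 — 2 statements merged into one kernel-verified Lean document; each statement's English description precedes it below -/
import Mathlib

section
/- Let g satisfy ∂₀'g = (C(γ−1)/(2B))g and ∂₁'g = (Cγβ/(2B))g with B ≠ 0, β ∈ (0,1), γ = 1/√(1−β²). Then F' = Cγ(∂₀'g/g − β∂₁'g/g) + B(∂₁'²g/g − ∂₀'²g/g) vanishes identically. -/
theorem Fprime_vanishes (B C : ℂ) (hB : B ≠ 0) (β : ℝ) (hβ : β ∈ Set.Ioo (0:ℝ) 1)
    (γ : ℝ) (hγ : γ = 1 / Real.sqrt (1 - β ^ 2))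
    (g : ℝ → ℝ → ℂ)
    (h0 : ∀ x0 x1 : ℝ, deriv (fun s => g s x1) x0 = (C * ((γ : ℂ) - 1) / (2 * B)) * g x0 x1)
    (h1 : ∀ x0 x1 : ℝ, deriv (fun s => g x0 s) x1 = (C * (γ : ℂ) * (β : ℂ) / (2 * B)) * g x0 x1) :
    ∀ x0 x1 : ℝ,
      C * (γ : ℂ) * (deriv (fun s => g s x1) x0 / g x0 x1
        - (β : ℂ) * deriv (fun s => g x0 s) x1 / g x0 x1)
      + B * (deriv (fun s => deriv (fun s' => g x0 s') s) x1 / g x0 x1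
        - deriv (fun s => deriv (fun s' => g s' x1) s) x0 / g x0 x1) = 0 := by
  intro x0 x1
  have hpos : (0:ℝ) < 1 - β ^ 2 := by nlinarith [hβ.1, hβ.2]
  have hγ2R : γ ^ 2 * (1 - β ^ 2) = 1 := by
    rw [hγ, div_pow, Real.sq_sqrt hpos.le]
    field_simp
  have hγ2 : (γ : ℂ) ^ 2 * (1 - (β : ℂ) ^ 2) = 1 := by
    have := congrArg (Complex.ofReal) hγ2R
    push_cast at this
    exact this
  set k0 : ℂ := C * ((γ : ℂ) - 1) / (2 * B) with hk0
  set k1 : ℂ := C * (γ : ℂ) * (β : ℂ) / (2 * B) with hk1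
  have hd1 : deriv (fun s => deriv (fun s' => g x0 s') s) x1 = k1 * (k1 * g x0 x1) := by
    have : (fun s => deriv (fun s' => g x0 s') s) = fun s => k1 * g x0 s := by
      funext s; exact h1 x0 s
    rw [this, deriv_const_mul_field, h1]
  have hd0 : deriv (fun s => deriv (fun s' => g s' x1) s) x0 = k0 * (k0 * g x0 x1) := by
    have : (fun s => deriv (fun s' => g s' x1) s) = fun s => k0 * g s x1 := by
      funext s; exact h0 s x1
    rw [this, deriv_const_mul_field, h0]
  rw [hd0, hd1, h0, h1]
  by_cases hg : g x0 x1 = 0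
  · simp [hg]
  · rw [hk0, hk1]
    field_simp
    linear_combination (C ^ 2) * hγ2
end

section
/- Let m, c, ℏ > 0, v ∈ ℝ³ with |v| < c, γ = 1/√(1−|v|²/c²), and Ψ₀ ∈ ℂ. The function Ψ(r,t) = Ψ₀·exp[(i/ℏ)(−(γ−1)mc²t + γm v·r)] is a plane wave exp(i(k·r − ωt)) (times Ψ₀) with ℏω = (γ−1)mc² and ℏk = γm v; moreover this Ψ satisfies the free Lorentz covariant Schrödinger equation −(ℏ²/(2mc²))∂ₜ²Ψ + iℏ∂ₜΨ = −(ℏ²/(2m))∇²Ψ. -/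
open Complex

lemma hasDerivAt_mul_exp (Ψ₀ K L : ℂ) (t : ℝ) :
    HasDerivAt (fun s : ℝ => Ψ₀ * Complex.exp (K + L * s)) (Ψ₀ * L * Complex.exp (K + L * t)) t := by
  have h1 : HasDerivAt (fun s : ℝ => (s : ℂ)) 1 t := by
    simpa using (hasDerivAt_id t).ofReal_comp
  have h2 : HasDerivAt (fun s : ℝ => K + L * (s : ℂ)) L t := by
    simpa using (h1.const_mul L).const_add K
  have h3 := (h2.cexp).const_mul Ψ₀
  convert h3 using 1
  case e'_9 => ring
  case e'_4 => rfl

lemma deriv_mul_exp (Ψ₀ K L : ℂ) (t : ℝ) :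
    deriv (fun s : ℝ => Ψ₀ * Complex.exp (K + L * s)) t = Ψ₀ * L * Complex.exp (K + L * t) :=
  (hasDerivAt_mul_exp Ψ₀ K L t).deriv

lemma deriv2_mul_exp (Ψ₀ K L : ℂ) (t : ℝ) :
    deriv (fun s : ℝ => deriv (fun s' : ℝ => Ψ₀ * Complex.exp (K + L * s')) s) t
      = Ψ₀ * L ^ 2 * Complex.exp (K + L * t) := by
  have h : (fun s : ℝ => deriv (fun s' : ℝ => Ψ₀ * Complex.exp (K + L * s')) s)
      = fun s : ℝ => (Ψ₀ * L) * Complex.exp (K + L * s) := funext fun s => deriv_mul_exp Ψ₀ K L s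
  rw [h, deriv_mul_exp]; ring

theorem boosted_rest_frame_solution (m c ℏ : ℝ) (hm : 0 < m) (hc : 0 < c) (hℏ : 0 < ℏ)
    (v : Fin 3 → ℝ) (hv : Real.sqrt (∑ i, v i ^ 2) < c)
    (γ : ℝ) (hγ : γ = 1 / Real.sqrt (1 - (∑ i, v i ^ 2) / c ^ 2))
    (Ψ₀ : ℂ)
    (Ψ : (Fin 3 → ℝ) → ℝ → ℂ)
    (hΨ : ∀ r t, Ψ r t = Ψ₀ * Complex.exp ((I / (ℏ : ℂ)) *
      (-(((γ : ℂ) - 1) * (m : ℂ) * (c : ℂ) ^ 2 * (t : ℂ)) +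
        (γ : ℂ) * (m : ℂ) * (↑(∑ i, v i * r i) : ℂ))))
    (ω : ℝ) (hω : ω = (γ - 1) * m * c ^ 2 / ℏ)
    (k : Fin 3 → ℝ) (hk : ∀ i, k i = γ * m * v i / ℏ) :
    (∀ r t, Ψ r t = Ψ₀ * Complex.exp (I * ((↑(∑ i, k i * r i) : ℂ) - (ω : ℂ) * (t : ℂ)))) ∧
    (ℏ * ω = (γ - 1) * m * c ^ 2) ∧ (∀ i, ℏ * k i = γ * m * v i) ∧
    (∀ r t,
      -(((ℏ : ℂ) ^ 2) / (2 * (m : ℂ) * (c : ℂ) ^ 2)) *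
          deriv (fun s => deriv (fun s' => Ψ r s') s) t
        + I * (ℏ : ℂ) * deriv (fun s => Ψ r s) t =
      -(((ℏ : ℂ) ^ 2) / (2 * (m : ℂ))) *
          ∑ i, deriv (fun s => deriv (fun s' => Ψ (Function.update r i s') t) s) (r i)) := by
  have hℏ0 : (ℏ : ℝ) ≠ 0 := hℏ.ne'
  have hm0 : (m : ℝ) ≠ 0 := hm.ne'
  have hc0 : (c : ℝ) ≠ 0 := hc.ne'
  have hℏ0' : (ℏ : ℂ) ≠ 0 := by exact_mod_cast hℏ0
  have hm0' : (m : ℂ) ≠ 0 := by exact_mod_cast hm0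
  have hc0' : (c : ℂ) ≠ 0 := by exact_mod_cast hc0
  set s2 : ℝ := ∑ i, v i ^ 2 with hs2
  have hs2nn : 0 ≤ s2 := Finset.sum_nonneg fun i _ => sq_nonneg _
  have hlt : s2 < c ^ 2 := by
    have := Real.sq_sqrt hs2nn
    nlinarith [Real.sqrt_nonneg s2]
  have hpos : 0 < 1 - s2 / c ^ 2 := by
    rw [sub_pos, div_lt_one (by positivity)]; exact hlt
  have hsub : c ^ 2 - s2 ≠ 0 := by nlinarith
  have hγ2 : γ ^ 2 * (c ^ 2 - s2) = c ^ 2 := by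
    rw [hγ, div_pow, one_pow, Real.sq_sqrt hpos.le]
    field_simp
  refine ⟨?_, ?_, ?_, ?_⟩
  · intro r t
    rw [hΨ]
    congr 1
    have hkr : ∑ i, k i * r i = γ * m / ℏ * ∑ i, v i * r i := by
      rw [Finset.mul_sum]
      exact Finset.sum_congr rfl fun i _ => by rw [hk]; ring
    rw [hkr, hω]
    push_cast
    field_simp
    ring
  · rw [hω]; field_simp
  · intro i; rw [hk i]; field_simp
  · intro r t
    set S : ℝ := ∑ i, v i * r i with hS
    set Lt : ℂ := (I / (ℏ : ℂ)) * (-(((γ : ℂ) - 1) * m * (c : ℂ) ^ 2)) with hLt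
    set Kt : ℂ := (I / (ℏ : ℂ)) * ((γ : ℂ) * m * (S : ℂ)) with hKt
    have hfun_t : (fun s : ℝ => Ψ r s) = fun s : ℝ => Ψ₀ * Complex.exp (Kt + Lt * s) := by
      funext s
      rw [hΨ, show (∑ i, v i * r i) = S from hS.symm]
      congr 1
      rw [hKt, hLt]
      ring
    have hsum_upd : ∀ i : Fin 3, ∀ s' : ℝ,
        ∑ j, v j * Function.update r i s' j = (S - v i * r i) + v i * s' := by
      intro i s'
      have h1 : ∑ j, v j * Function.update r i s' j
          = v i * s' + ∑ j ∈ Finset.univ.erase i, v j * r j := by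
        rw [← Finset.add_sum_erase Finset.univ _ (Finset.mem_univ i)]
        congr 1
        · simp
        · exact Finset.sum_congr rfl fun j hj => by
            rw [Function.update_of_ne (Finset.ne_of_mem_erase hj)]
      have h2 : S = v i * r i + ∑ j ∈ Finset.univ.erase i, v j * r j :=
        (Finset.add_sum_erase Finset.univ _ (Finset.mem_univ i)).symm
      rw [h1, h2]; ring
    set Lx : Fin 3 → ℂ := fun i => (I / (ℏ : ℂ)) * ((γ : ℂ) * m * (v i : ℂ)) with hLx
    set Kx : Fin 3 → ℂ := fun i => (I / (ℏ : ℂ)) *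
      (-(((γ : ℂ) - 1) * m * (c : ℂ) ^ 2 * (t : ℂ)) + (γ : ℂ) * m * ((S - v i * r i : ℝ) : ℂ)) with hKx
    have hfun_x : ∀ i : Fin 3, (fun s' : ℝ => Ψ (Function.update r i s') t)
        = fun s' : ℝ => Ψ₀ * Complex.exp (Kx i + Lx i * s') := by
      intro i
      funext s'
      rw [hΨ, hsum_upd i s']
      congr 1
      rw [hKx, hLx]
      push_cast
      ring
    have hE : ∀ i : Fin 3, Kx i + Lx i * (r i : ℂ) = Kt + Lt * (t : ℂ) := by
      intro i
      rw [hKx, hLx, hKt, hLt]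
      push_cast
      ring
    rw [hfun_t, deriv_mul_exp, deriv2_mul_exp]
    set E : ℂ := Complex.exp (Kt + Lt * (t : ℂ)) with hEdef
    have hrw : ∀ i : Fin 3,
        deriv (fun s => deriv (fun s' => Ψ (Function.update r i s') t) s) (r i)
          = Ψ₀ * (Lx i) ^ 2 * E := by
      intro i
      calc deriv (fun s => deriv (fun s' => Ψ (Function.update r i s') t) s) (r i)
          = deriv (fun s => deriv (fun s' : ℝ => Ψ₀ * Complex.exp (Kx i + Lx i * s')) s) (r i) := by
            congr 1; funext s; rw [hfun_x i]
        _ = Ψ₀ * (Lx i) ^ 2 * Complex.exp (Kx i + Lx i * (r i)) := deriv2_mul_exp _ _ _ _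
        _ = Ψ₀ * (Lx i) ^ 2 * E := by rw [hE i]
    simp only [hrw]
    have hfold : ∑ i, Ψ₀ * (Lx i) ^ 2 * E = (∑ i, (Lx i) ^ 2) * (Ψ₀ * E) := by
      rw [Finset.sum_mul]
      exact Finset.sum_congr rfl fun i _ => by ring
    have hsumLx : ∑ i, (Lx i) ^ 2 = (I / (ℏ : ℂ)) ^ 2 * ((γ : ℂ) * m) ^ 2 * (s2 : ℂ) := by
      rw [hs2]
      push_cast
      rw [Finset.mul_sum]
      exact Finset.sum_congr rfl fun i _ => by rw [hLx]; ring
    have hcoef : -(((ℏ : ℂ) ^ 2) / (2 * (m : ℂ) * (c : ℂ) ^ 2)) * Lt ^ 2 + I * (ℏ : ℂ) * Lt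
        = -(((ℏ : ℂ) ^ 2) / (2 * (m : ℂ))) * ((I / (ℏ : ℂ)) ^ 2 * ((γ : ℂ) * m) ^ 2 * (s2 : ℂ)) := by
      have hγ2' : (γ : ℂ) ^ 2 * ((c : ℂ) ^ 2 - (s2 : ℂ)) = (c : ℂ) ^ 2 := by exact_mod_cast hγ2
      have e1 : ((I / (ℏ:ℂ)) * (-(((γ:ℂ)-1)*m*(c:ℂ)^2)))^2
          = -(((((γ:ℂ)-1)*m*(c:ℂ)^2)^2) / (ℏ:ℂ)^2) := by
        rw [mul_pow, div_pow, Complex.I_sq]; ring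
      have e2 : (I/(ℏ:ℂ))^2 = -(1/(ℏ:ℂ)^2) := by rw [div_pow, Complex.I_sq]; ring
      have e3 : I * (ℏ:ℂ) * ((I/(ℏ:ℂ)) * (-(((γ:ℂ)-1)*m*(c:ℂ)^2))) = ((γ:ℂ)-1)*m*(c:ℂ)^2 := by
        have h : I * (ℏ:ℂ) * ((I/(ℏ:ℂ)) * (-(((γ:ℂ)-1)*m*(c:ℂ)^2)))
            = I^2 * ((ℏ:ℂ)/(ℏ:ℂ)) * (-(((γ:ℂ)-1)*m*(c:ℂ)^2)) := by ring
        rw [h, Complex.I_sq, div_self hℏ0']; ring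
      rw [hLt, e1, e2, e3]
      field_simp
      ring_nf
      linear_combination hγ2'
    calc -(((ℏ : ℂ) ^ 2) / (2 * (m : ℂ) * (c : ℂ) ^ 2)) * (Ψ₀ * Lt ^ 2 * E)
          + I * (ℏ : ℂ) * (Ψ₀ * Lt * E)
        = (-(((ℏ : ℂ) ^ 2) / (2 * (m : ℂ) * (c : ℂ) ^ 2)) * Lt ^ 2 + I * (ℏ : ℂ) * Lt) * (Ψ₀ * E) := by
          ring
      _ = (-(((ℏ : ℂ) ^ 2) / (2 * (m : ℂ))) * ((I / (ℏ : ℂ)) ^ 2 * ((γ : ℂ) * m) ^ 2 * (s2 : ℂ)))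
            * (Ψ₀ * E) := by rw [hcoef]
      _ = -(((ℏ : ℂ) ^ 2) / (2 * (m : ℂ))) * ((∑ i, (Lx i) ^ 2) * (Ψ₀ * E)) := by
          rw [hsumLx]; ring
      _ = -(((ℏ : ℂ) ^ 2) / (2 * (m : ℂ))) * ∑ i, Ψ₀ * (Lx i) ^ 2 * E := by rw [hfold]
end
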